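/- Let f : M → ℂ^P and g : M → ℂ^Q be functions and define R(z,w) = Σ_{p=1}^P f_p(z)·conj(f_p(w)) − Σ_{q=1}^Q g_q(z)·conj(g_q(w)). Then R ∈ 𝒫_k(M) if and only if for every j with 1 ≤ j ≤ k and every choice of j points z_1, …, z_j ∈ M, one has Σ_{m=0}^j (−1)^m Σ_{A,B} |det M_{A,B}(z)|² ≥ 0, where the inner sum is over all subsets A ⊆ {1,…,P} with |A| = j−m and B ⊆ {1,…,Q} with |B| = m, and M_{A,B}(z) is the j×j matrix whose columns are the vectors (f_a(z_1), …, f_a(z_j)) for a ∈ A together with the vectors (g_b(z_1), …, g_b(z_j)) for b ∈ B. -/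

import Mathlib

open scoped ComplexOrder

/-- `R ∈ 𝒫_N(M)`: for all points `z_1, …, z_N ∈ M` and scalars `a_1, …, a_N ∈ ℂ`,
the sum `Σ_{i,j} R(z_i, z_j) a_i conj(a_j)` is a nonnegative real number. -/
def InP {M : Type*} (N : ℕ) (R : M × M → ℂ) : Prop :=
  ∀ (z : Fin N → M) (a : Fin N → ℂ),
    0 ≤ ∑ i, ∑ j, R (z i, z j) * a i * (starRingEnd ℂ) (a j)

/-- Given component functions `f : M → ℂ^P`, `g : M → ℂ^Q`, points `z_1, …, z_j`, and
subsets `A ⊆ {1,…,P}`, `B ⊆ {1,…,Q}` with `|A| + |B| = j`, this is the determinant of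
the `j × j` matrix `M_{A,B}(z)` whose columns are the vectors `(f_a(z_1), …, f_a(z_j))`
for `a ∈ A` together with `(g_b(z_1), …, g_b(z_j))` for `b ∈ B` (in some order; the
squared absolute value of the determinant does not depend on the ordering). -/
noncomputable def subDet {M : Type*} {P Q k : ℕ} (f : M → Fin P → ℂ) (g : M → Fin Q → ℂ)
    (z : Fin k → M) (A : Finset (Fin P)) (B : Finset (Fin Q)) : ℂ :=
  if h : Fintype.card (↥A ⊕ ↥B) = k then
    Matrix.det (Matrix.of fun i j =>
      Sum.elim (fun a : ↥A => f (z i) a) (fun b : ↥B => g (z i) b)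
        ((Fintype.equivFinOfCardEq h).symm j))
  else 0

open Matrix in
/-- Auxiliary summand for the Cauchy–Binet style expansion. -/
noncomputable def Fterm {M : Type*} {P Q j : ℕ} (f : M → Fin P → ℂ) (g : M → Fin Q → ℂ)
    (z : Fin j → M) (τ : Fin j → Fin P ⊕ Fin Q) : ℂ :=
  (∏ i, (Sum.elim (fun _ => (1:ℂ)) (fun _ => -1) (τ i) * Sum.elim (f (z i)) (g (z i)) (τ i))) *
    Matrix.det (Matrix.of fun i l => (starRingEnd ℂ) (Sum.elim (f (z l)) (g (z l)) (τ i)))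

open Matrix in
lemma term_eq {M : Type*} {P Q j : ℕ} (f : M → Fin P → ℂ) (g : M → Fin Q → ℂ)
    (z : Fin j → M) (A : Finset (Fin P)) (B : Finset (Fin Q))
    (h : Fintype.card (↥A ⊕ ↥B) = j) :
    ∑ σ : Equiv.Perm (Fin j),
        Fterm f g z (fun i => Sum.map Subtype.val Subtype.val
          ((Fintype.equivFinOfCardEq h).symm (σ i)))
      = (-1 : ℂ) ^ B.card * (Complex.normSq (subDet f g z A B) : ℂ) := by
  classical
  set e := Fintype.equivFinOfCardEq h with he
  set ι : ↥A ⊕ ↥B → Fin P ⊕ Fin Q := Sum.map Subtype.val Subtype.val with hι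
  set C : M → Fin P ⊕ Fin Q → ℂ := fun x => Sum.elim (f x) (g x) with hC
  set N : Matrix (Fin j) (Fin j) ℂ := Matrix.of fun i l => C (z i) (ι (e.symm l)) with hN
  have hsub : subDet f g z A B = N.det := by
    rw [subDet, dif_pos h]
    congr 1
    ext i l
    rcases hel : e.symm l with a | b <;> simp [hN, hC, hι, ← he, hel]
  have hterm : ∀ σ : Equiv.Perm (Fin j),
      Fterm f g z (fun i => ι (e.symm (σ i))) =
        ((-1 : ℂ) ^ B.card * (starRingEnd ℂ) N.det) *
          ((Equiv.Perm.sign σ : ℂ) * ∏ i, C (z i) (ι (e.symm (σ i)))) := by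
    intro σ
    have hprod : (∏ i, (Sum.elim (fun _ => (1:ℂ)) (fun _ => -1) (ι (e.symm (σ i))) *
        C (z i) (ι (e.symm (σ i))))) =
        (-1:ℂ) ^ B.card * ∏ i, C (z i) (ι (e.symm (σ i))) := by
      rw [Finset.prod_mul_distrib]
      congr 1
      have := Equiv.prod_comp (σ.trans e.symm)
        (fun x : ↥A ⊕ ↥B => Sum.elim (fun _ => (1:ℂ)) (fun _ => -1) (ι x))
      simp only [Equiv.trans_apply] at this
      rw [this, Fintype.prod_sum_type]
      simp [hι, Finset.prod_const, Fintype.card_coe]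
    have h1 : (Matrix.of fun i l =>
        (starRingEnd ℂ) (Sum.elim (f (z l)) (g (z l)) (ι (e.symm (σ i)))))
        = fun i => Nᴴ (σ i) := by
      ext i l
      simp [hN, hC, Matrix.conjTranspose_apply]
    have hdet : Matrix.det (Matrix.of fun i l =>
        (starRingEnd ℂ) (Sum.elim (f (z l)) (g (z l)) (ι (e.symm (σ i))))) =
        (Equiv.Perm.sign σ : ℂ) * (starRingEnd ℂ) N.det := by
      rw [h1]
      rw [show (fun i => Nᴴ (σ i)) = Nᴴ.submatrix σ id from rfl,
        Matrix.det_permute, Matrix.det_conjTranspose]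
      rfl
    simp only [Fterm]
    simp only [hC] at hprod
    rw [hprod, hdet]
    ring
  rw [Fintype.sum_congr _ _ hterm, ← Finset.mul_sum]
  have hleib : ∑ σ : Equiv.Perm (Fin j),
      ((Equiv.Perm.sign σ : ℂ) * ∏ i, C (z i) (ι (e.symm (σ i)))) = N.det := by
    rw [← Matrix.det_transpose N, Matrix.det_apply']
    apply Finset.sum_congr rfl
    intro σ _
    rfl
  rw [hleib, hsub, Complex.normSq_eq_conj_mul_self]
  ring

open Matrix in
/-- Cauchy–Binet style expansion of the determinant of the Gram-type matrix. -/
lemma myCB {M : Type*} {P Q : ℕ} (f : M → Fin P → ℂ) (g : M → Fin Q → ℂ)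
    {j : ℕ} (z : Fin j → M) :
    Matrix.det (Matrix.of fun i l : Fin j =>
        ∑ t : Fin P ⊕ Fin Q,
          Sum.elim (fun _ => (1:ℂ)) (fun _ => -1) t *
            Sum.elim (f (z i)) (g (z i)) t *
            (starRingEnd ℂ) (Sum.elim (f (z l)) (g (z l)) t)) =
      ((∑ m ∈ Finset.range (j + 1), (-1 : ℝ) ^ m *
          ∑ A ∈ Finset.univ.powersetCard (j - m), ∑ B ∈ Finset.univ.powersetCard m,
            Complex.normSq (subDet f g z A B) : ℝ) : ℂ) := by
  classical
  set C : M → Fin P ⊕ Fin Q → ℂ := fun x => Sum.elim (f x) (g x) with hC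
  set ε : Fin P ⊕ Fin Q → ℂ := Sum.elim (fun _ => (1:ℂ)) (fun _ => -1) with hε
  have step1 : Matrix.det (Matrix.of fun i l : Fin j =>
        ∑ t : Fin P ⊕ Fin Q, ε t * C (z i) t * (starRingEnd ℂ) (C (z l) t)) =
      ∑ τ : Fin j → Fin P ⊕ Fin Q, Fterm f g z τ := by
    have hrows : (Matrix.of fun i l : Fin j =>
        ∑ t : Fin P ⊕ Fin Q, ε t * C (z i) t * (starRingEnd ℂ) (C (z l) t)) =
        fun i => ∑ t : Fin P ⊕ Fin Q,
          (ε t * C (z i) t) • fun l => (starRingEnd ℂ) (C (z l) t) := by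
      ext i l
      simp [Finset.sum_apply]
    rw [show Matrix.det (Matrix.of fun i l : Fin j =>
        ∑ t : Fin P ⊕ Fin Q, ε t * C (z i) t * (starRingEnd ℂ) (C (z l) t)) =
        Matrix.detRowAlternating (fun i => ∑ t : Fin P ⊕ Fin Q,
          (ε t * C (z i) t) • fun l => (starRingEnd ℂ) (C (z l) t)) from
      congrArg _ hrows]
    rw [show (Matrix.detRowAlternating (fun i => ∑ t : Fin P ⊕ Fin Q,
          (ε t * C (z i) t) • fun l => (starRingEnd ℂ) (C (z l) t)) : ℂ) =
        Matrix.detRowAlternating.toMultilinearMap (fun i => ∑ t : Fin P ⊕ Fin Q,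
          (ε t * C (z i) t) • fun l => (starRingEnd ℂ) (C (z l) t)) from rfl]
    rw [MultilinearMap.map_sum]
    apply Finset.sum_congr rfl
    intro τ _
    rw [show (Matrix.detRowAlternating.toMultilinearMap
        (fun i => (ε (τ i) * C (z i) (τ i)) • fun l => (starRingEnd ℂ) (C (z l) (τ i))) : ℂ)
        = Matrix.detRowAlternating.toMultilinearMap
          (fun i => (ε (τ i) * C (z i) (τ i)) •
            (fun l => (starRingEnd ℂ) (C (z l) (τ i)))) from rfl]
    rw [MultilinearMap.map_smul_univ]
    simp only [smul_eq_mul]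
    rfl
  have step2 : ∑ τ : Fin j → Fin P ⊕ Fin Q, Fterm f g z τ =
      ∑ τ ∈ Finset.univ.filter (fun τ : Fin j → Fin P ⊕ Fin Q => Function.Injective τ),
        Fterm f g z τ := by
    symm
    apply Finset.sum_subset (Finset.filter_subset _ _)
    intro τ _ hτ
    simp only [Finset.mem_filter, Finset.mem_univ, true_and] at hτ
    rw [Function.Injective] at hτ
    push_neg at hτ
    obtain ⟨i1, i2, heq, hne⟩ := hτ
    have : Matrix.det (Matrix.of fun i l =>
        (starRingEnd ℂ) (Sum.elim (f (z l)) (g (z l)) (τ i))) = 0 := by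
      apply Matrix.det_zero_of_row_eq hne
      ext l
      simp [heq]
    simp [Fterm, this]
  rw [step1, step2]
  -- Step 3: reparametrize injective maps by (m, A, B, σ)
  set X : Finset ((_ : ℕ) × Finset (Fin P) × Finset (Fin Q) × Equiv.Perm (Fin j)) :=
    (Finset.range (j+1)).sigma (fun m =>
      (Finset.univ.powersetCard (j - m)) ×ˢ ((Finset.univ.powersetCard m) ×ˢ Finset.univ))
    with hX
  have hmem : ∀ x ∈ X, x.1 ≤ j ∧ x.2.1.card = j - x.1 ∧ x.2.2.1.card = x.1 := by
    rintro ⟨m, A, B, σ⟩ hx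
    simp only [hX, Finset.mem_sigma, Finset.mem_product, Finset.mem_range,
      Finset.mem_powersetCard_univ, Finset.mem_univ] at hx
    exact ⟨Nat.lt_succ_iff.mp hx.1, hx.2.1, hx.2.2.1⟩
  have hcard : ∀ x ∈ X, Fintype.card (↥x.2.1 ⊕ ↥x.2.2.1) = j := by
    intro x hx
    obtain ⟨h1, h2, h3⟩ := hmem x hx
    simp only [Fintype.card_sum, Fintype.card_coe, h2, h3]
    omega
  set G : ((_ : ℕ) × Finset (Fin P) × Finset (Fin Q) × Equiv.Perm (Fin j)) → ℂ :=
    fun x => if h : Fintype.card (↥x.2.1 ⊕ ↥x.2.2.1) = j then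
      Fterm f g z (fun i => Sum.map Subtype.val Subtype.val
        ((Fintype.equivFinOfCardEq h).symm (x.2.2.2 i))) else 0 with hG
  have hchar : ∀ (A : Finset (Fin P)) (B : Finset (Fin Q)) (σ : Equiv.Perm (Fin j))
      (hc : Fintype.card (↥A ⊕ ↥B) = j) (p : Fin P),
      p ∈ A ↔ ∃ i0 : Fin j, Sum.map Subtype.val Subtype.val
        ((Fintype.equivFinOfCardEq hc).symm (σ i0)) = Sum.inl p := by
    intro A B σ hc p
    constructor
    · intro hp
      refine ⟨σ.symm ((Fintype.equivFinOfCardEq hc) (Sum.inl ⟨p, hp⟩)), ?_⟩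
      simp
    · rintro ⟨i0, hi0⟩
      rcases hx : (Fintype.equivFinOfCardEq hc).symm (σ i0) with a | b
      · rw [hx] at hi0
        simp only [Sum.map_inl, Sum.inl.injEq] at hi0
        exact hi0 ▸ a.2
      · rw [hx] at hi0
        simp at hi0
  have hcharB : ∀ (A : Finset (Fin P)) (B : Finset (Fin Q)) (σ : Equiv.Perm (Fin j))
      (hc : Fintype.card (↥A ⊕ ↥B) = j) (q : Fin Q),
      q ∈ B ↔ ∃ i0 : Fin j, Sum.map Subtype.val Subtype.val
        ((Fintype.equivFinOfCardEq hc).symm (σ i0)) = Sum.inr q := by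
    intro A B σ hc q
    constructor
    · intro hq
      refine ⟨σ.symm ((Fintype.equivFinOfCardEq hc) (Sum.inr ⟨q, hq⟩)), ?_⟩
      simp
    · rintro ⟨i0, hi0⟩
      rcases hx : (Fintype.equivFinOfCardEq hc).symm (σ i0) with a | b
      · rw [hx] at hi0
        simp at hi0
      · rw [hx] at hi0
        simp only [Sum.map_inr, Sum.inr.injEq] at hi0
        exact hi0 ▸ b.2
  have step3 : ∑ x ∈ X, G x =
      ∑ τ ∈ Finset.univ.filter (fun τ : Fin j → Fin P ⊕ Fin Q => Function.Injective τ),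
        Fterm f g z τ := by
    refine Finset.sum_bij
      (fun x hx => (fun i => Sum.map Subtype.val Subtype.val
        ((Fintype.equivFinOfCardEq (hcard x hx)).symm (x.2.2.2 i))))
      ?_ ?_ ?_ ?_
    · intro x hx
      simp only [Finset.mem_filter, Finset.mem_univ, true_and]
      intro i1 i2 h12
      exact x.2.2.2.injective ((Fintype.equivFinOfCardEq (hcard x hx)).symm.injective
        ((Subtype.val_injective.sumMap Subtype.val_injective) h12))
    · rintro ⟨m1, A1, B1, σ1⟩ hx1 ⟨m2, A2, B2, σ2⟩ hx2 heq
      have hτ := fun i0 => congrFun heq i0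
      simp only at hτ
      obtain rfl : A1 = A2 := by
        ext p
        rw [hchar A1 B1 σ1 (hcard _ hx1) p, hchar A2 B2 σ2 (hcard _ hx2) p]
        exact exists_congr fun i0 => by rw [hτ i0]
      obtain rfl : B1 = B2 := by
        ext q
        rw [hcharB A1 B1 σ1 (hcard _ hx1) q, hcharB A1 B2 σ2 (hcard _ hx2) q]
        exact exists_congr fun i0 => by rw [hτ i0]
      obtain rfl : m1 = m2 := by
        have h1 := (hmem _ hx1).2.2
        have h2 := (hmem _ hx2).2.2
        simp only at h1 h2
        omega
      obtain rfl : σ1 = σ2 := by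
        apply Equiv.ext
        intro i0
        have h12 := hτ i0
        exact (Fintype.equivFinOfCardEq (hcard _ hx1)).symm.injective
          ((Subtype.val_injective.sumMap Subtype.val_injective) h12)
      rfl
    · intro τ hτmem
      simp only [Finset.mem_filter, Finset.mem_univ, true_and] at hτmem
      set A : Finset (Fin P) := Finset.univ.filter (fun p => ∃ i0, τ i0 = Sum.inl p) with hA
      set B : Finset (Fin Q) := Finset.univ.filter (fun q => ∃ i0, τ i0 = Sum.inr q) with hB
      have specA : ∀ a : ↥A, ∃ i0, τ i0 = Sum.inl ↑a := by
        rintro ⟨a, ha⟩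
        exact (Finset.mem_filter.mp ha).2
      have specB : ∀ b : ↥B, ∃ i0, τ i0 = Sum.inr ↑b := by
        rintro ⟨b, hb⟩
        exact (Finset.mem_filter.mp hb).2
      set ψ : ↥A ⊕ ↥B → Fin j := Sum.elim (fun a => Classical.choose (specA a))
        (fun b => Classical.choose (specB b)) with hψdef
      have hψ : ∀ x, τ (ψ x) = Sum.map Subtype.val Subtype.val x := by
        rintro (a | b)
        · exact Classical.choose_spec (specA a)
        · exact Classical.choose_spec (specB b)
      have hbij : Function.Bijective ψ := by
        constructor
        · intro x y hxy
          apply (Subtype.val_injective.sumMap Subtype.val_injective)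
          rw [← hψ x, ← hψ y, hxy]
        · intro i0
          rcases h0 : τ i0 with p | q
          · have hp : p ∈ A := Finset.mem_filter.mpr ⟨Finset.mem_univ _, ⟨i0, h0⟩⟩
            exact ⟨Sum.inl ⟨p, hp⟩, hτmem (by rw [hψ]; simp [h0])⟩
          · have hq : q ∈ B := Finset.mem_filter.mpr ⟨Finset.mem_univ _, ⟨i0, h0⟩⟩
            exact ⟨Sum.inr ⟨q, hq⟩, hτmem (by rw [hψ]; simp [h0])⟩
      have hcardAB : Fintype.card (↥A ⊕ ↥B) = j := by
        rw [Fintype.card_of_bijective hbij, Fintype.card_fin]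
      have hsplit : A.card + B.card = j := by
        rw [← Fintype.card_coe, ← Fintype.card_coe, ← Fintype.card_sum, hcardAB]
      set ψe : ↥A ⊕ ↥B ≃ Fin j := Equiv.ofBijective ψ hbij with hψe
      set σ : Equiv.Perm (Fin j) := ψe.symm.trans (Fintype.equivFinOfCardEq hcardAB) with hσ
      have hxmem : (⟨B.card, A, B, σ⟩ :
          (_ : ℕ) × Finset (Fin P) × Finset (Fin Q) × Equiv.Perm (Fin j)) ∈ X := by
        simp only [hX, Finset.mem_sigma, Finset.mem_product, Finset.mem_range,
          Finset.mem_powersetCard_univ, Finset.mem_univ, and_true]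
        omega
      refine ⟨⟨B.card, A, B, σ⟩, hxmem, ?_⟩
      funext i0
      show Sum.map Subtype.val Subtype.val
        ((Fintype.equivFinOfCardEq (hcard _ hxmem)).symm (σ i0)) = τ i0
      have : (Fintype.equivFinOfCardEq (hcard _ hxmem)).symm (σ i0) = ψe.symm i0 :=
        (Fintype.equivFinOfCardEq hcardAB).symm_apply_apply (ψe.symm i0)
      rw [this, ← hψ (ψe.symm i0)]
      congr 1
      exact ψe.apply_symm_apply i0
    · intro x hx
      rw [hG]
      simp only
      rw [dif_pos (hcard x hx)]
  rw [← step3, hX, Finset.sum_sigma]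
  push_cast
  refine Finset.sum_congr rfl fun m hm => ?_
  rw [Finset.sum_product, Finset.mul_sum]
  refine Finset.sum_congr rfl fun A hA => ?_
  rw [Finset.sum_product, Finset.mul_sum]
  refine Finset.sum_congr rfl fun B hB => ?_
  have hc : Fintype.card (↥A ⊕ ↥B) = j := by
    simp only [Finset.mem_range] at hm
    simp only [Finset.mem_powersetCard_univ] at hA hB
    simp only [Fintype.card_sum, Fintype.card_coe, hA, hB]
    omega
  have hBc : B.card = m := Finset.mem_powersetCard_univ.mp hB
  calc ∑ σ : Equiv.Perm (Fin j), G ⟨m, A, B, σ⟩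
      = ∑ σ : Equiv.Perm (Fin j), Fterm f g z (fun i => Sum.map Subtype.val Subtype.val
          ((Fintype.equivFinOfCardEq hc).symm (σ i))) := by
        refine Finset.sum_congr rfl fun σ _ => ?_
        rw [hG]
        simp only
        rw [dif_pos hc]
    _ = (-1 : ℂ) ^ B.card * (Complex.normSq (subDet f g z A B) : ℂ) := term_eq f g z A B hc
    _ = (-1 : ℂ) ^ m * (Complex.normSq (subDet f g z A B) : ℂ) := by rw [hBc]

open Matrix in
lemma det_piecewise_single {k : ℕ} (c : ℂ) (T : Matrix (Fin k) (Fin k) ℂ)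
    (s : Finset (Fin k)) :
    Matrix.det (s.piecewise (T : Fin k → Fin k → ℂ) (c • (1 : Matrix (Fin k) (Fin k) ℂ))) =
      c ^ (k - s.card) * Matrix.det (Matrix.of fun i l : ↥s => T i l) := by
  classical
  set N : Matrix (Fin k) (Fin k) ℂ :=
    s.piecewise (T : Fin k → Fin k → ℂ) (c • (1 : Matrix (Fin k) (Fin k) ℂ)) with hN
  set e : ↥s ⊕ {x : Fin k // ¬ x ∈ s} ≃ Fin k := Equiv.sumCompl (· ∈ s) with he
  have hsub : N.submatrix e e = Matrix.fromBlocks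
      (Matrix.of fun a b : ↥s => T a b)
      (Matrix.of fun (a : ↥s) (b : {x : Fin k // ¬ x ∈ s}) => T a b)
      0 (c • (1 : Matrix {x : Fin k // ¬ x ∈ s} {x : Fin k // ¬ x ∈ s} ℂ)) := by
    ext x y
    simp only [Matrix.submatrix_apply]
    rcases x with a | a <;> rcases y with b | b
    · simp [hN, he, Finset.piecewise, a.2]
    · simp [hN, he, Finset.piecewise, a.2]
    · have hne : (a : Fin k) ≠ (b : Fin k) := fun h => a.2 (h ▸ b.2)
      simp [hN, he, Finset.piecewise, a.2, Matrix.one_apply, hne]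
    · by_cases hab : (a : Fin k) = (b : Fin k)
      · have : a = b := Subtype.ext hab
        subst this
        simp [hN, he, Finset.piecewise, a.2, Matrix.one_apply]
      · have : a ≠ b := fun h => hab (congrArg Subtype.val h)
        simp [hN, he, Finset.piecewise, a.2, Matrix.one_apply, hab, this]
  have h1 : N.det = (N.submatrix e e).det := (Matrix.det_submatrix_equiv_self e N).symm
  rw [h1, hsub, Matrix.det_fromBlocks_zero₂₁, Matrix.det_smul, Matrix.det_one, mul_one]
  have hcc : Fintype.card {x : Fin k // ¬ x ∈ s} = k - s.card := by
    rw [Fintype.card_subtype_compl]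
    simp [Fintype.card_coe]
  rw [hcc, mul_comm]

open Matrix in
lemma det_add_smul_one {k : ℕ} (c : ℂ) (T : Matrix (Fin k) (Fin k) ℂ) :
    Matrix.det (T + c • 1) =
      ∑ s : Finset (Fin k), c ^ (k - s.card) *
        Matrix.det (Matrix.of fun i l : ↥s => T i l) := by
  classical
  have h0 : Matrix.det (T + c • 1) =
      Matrix.detRowAlternating.toMultilinearMap
        ((T : Fin k → Fin k → ℂ) + ((c • 1 : Matrix (Fin k) (Fin k) ℂ) : Fin k → Fin k → ℂ)) :=
    rfl
  rw [h0]
  erw [MultilinearMap.map_add_univ]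
  apply Finset.sum_congr rfl
  intro s _
  exact det_piecewise_single c T s

open Matrix in
lemma psd_of_minors {k : ℕ} (T : Matrix (Fin k) (Fin k) ℂ) (hherm : T.IsHermitian)
    (hminor : ∀ s : Finset (Fin k), ∃ r : ℝ, 0 ≤ r ∧
      Matrix.det (Matrix.of fun i l : ↥s => T i l) = (r : ℂ)) :
    T.PosSemidef := by
  classical
  apply hherm.posSemidef_iff_eigenvalues_nonneg.mpr
  intro i
  by_contra hneg
  push_neg at hneg
  simp only [Pi.zero_apply] at hneg
  set lam := hherm.eigenvalues i with hlam
  set t : ℝ := -lam with ht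
  have ht0 : 0 < t := by simp [ht]; linarith
  have hdet0 : Matrix.det (T + (t : ℂ) • 1) = 0 := by
    rw [← Matrix.exists_mulVec_eq_zero_iff]
    refine ⟨⇑(hherm.eigenvectorBasis i), ?_, ?_⟩
    · intro hzero
      exact hherm.eigenvectorBasis.orthonormal.ne_zero i (by
        ext l
        exact congrFun hzero l)
    · rw [Matrix.add_mulVec, Matrix.smul_mulVec, Matrix.one_mulVec,
        hherm.mulVec_eigenvectorBasis]
      funext l
      simp only [Pi.add_apply, Pi.smul_apply, Pi.zero_apply, smul_eq_mul,
        Complex.real_smul, ht]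
      push_cast
      ring
  choose r hr0 hrdet using hminor
  have hexp : Matrix.det (T + (t : ℂ) • 1) =
      ((∑ s : Finset (Fin k), t ^ (k - s.card) * r s : ℝ) : ℂ) := by
    rw [det_add_smul_one]
    push_cast
    apply Finset.sum_congr rfl
    intro s _
    rw [hrdet s]
  have hrempty : r (∅ : Finset (Fin k)) = 1 := by
    have := hrdet (∅ : Finset (Fin k))
    rw [Matrix.det_isEmpty] at this
    exact_mod_cast this.symm
  have hpos : 0 < ∑ s : Finset (Fin k), t ^ (k - s.card) * r s := by
    apply Finset.sum_pos'
    · intro s _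
      exact mul_nonneg (pow_nonneg ht0.le _) (hr0 s)
    · refine ⟨∅, Finset.mem_univ _, ?_⟩
      rw [hrempty, mul_one]
      simpa using pow_pos ht0 _
  rw [hexp] at hdet0
  exact absurd (Complex.ofReal_eq_zero.mp hdet0) hpos.ne'

/-- Proposition 1: `R ∈ 𝒫_k` iff
`Σ_{m=0}^j (−1)^m Σ_{|A|=j−m,|B|=m} |det M_{A,B}(z)|² ≥ 0` for all `1 ≤ j ≤ k`
and all choices of `j` points. -/
theorem stmt4 {M : Type*} (P Q k : ℕ) (hk : 1 ≤ k)
    (f : M → Fin P → ℂ) (g : M → Fin Q → ℂ) (R : M × M → ℂ)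
    (hR : ∀ z w : M, R (z, w) =
      ∑ p, f z p * (starRingEnd ℂ) (f w p) - ∑ q, g z q * (starRingEnd ℂ) (g w q)) :
    InP k R ↔
      ∀ j : ℕ, 1 ≤ j → j ≤ k → ∀ z : Fin j → M,
        0 ≤ ∑ m ∈ Finset.range (j + 1), (-1 : ℝ) ^ m *
          ∑ A ∈ Finset.univ.powersetCard (j - m), ∑ B ∈ Finset.univ.powersetCard m,
            Complex.normSq (subDet f g z A B) := by
  classical
  -- entry rewriting
  have hentry : ∀ {N : ℕ} (z : Fin N → M), (Matrix.of fun i l : Fin N => R (z i, z l)) =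
      Matrix.of fun i l : Fin N => ∑ t : Fin P ⊕ Fin Q,
        Sum.elim (fun _ => (1:ℂ)) (fun _ => -1) t * Sum.elim (f (z i)) (g (z i)) t *
          (starRingEnd ℂ) (Sum.elim (f (z l)) (g (z l)) t) := by
    intro N z
    ext i l
    simp only [Matrix.of_apply, hR, Fintype.sum_sum_type, Sum.elim_inl, Sum.elim_inr,
      one_mul, neg_mul, Finset.sum_neg_distrib]
    ring
  have hdetCB : ∀ {j : ℕ} (z : Fin j → M),
      Matrix.det (Matrix.of fun i l : Fin j => R (z i, z l)) =
        ((∑ m ∈ Finset.range (j + 1), (-1 : ℝ) ^ m *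
          ∑ A ∈ Finset.univ.powersetCard (j - m), ∑ B ∈ Finset.univ.powersetCard m,
            Complex.normSq (subDet f g z A B) : ℝ) : ℂ) := by
    intro j z
    rw [hentry z]
    exact myCB f g z
  have hherm : ∀ {N : ℕ} (z : Fin N → M),
      (Matrix.of fun i l : Fin N => R (z i, z l)).IsHermitian := by
    intro N z
    rw [Matrix.IsHermitian]
    ext i l
    simp only [Matrix.conjTranspose_apply, Matrix.of_apply, hR, star_sub, star_sum,
      star_mul', RCLike.star_def, RingHomCompTriple.comp_apply, Complex.conj_conj,
      RingHom.id_apply]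
    congr 1 <;> exact Finset.sum_congr rfl fun p _ => by ring
  have hquad : ∀ {N : ℕ} (T : Matrix (Fin N) (Fin N) ℂ) (a : Fin N → ℂ),
      ∑ i, ∑ l, T i l * a i * (starRingEnd ℂ) (a l) =
        dotProduct (star (star a)) (T.mulVec (star a)) := by
    intro N T a
    simp only [dotProduct, Matrix.mulVec, Pi.star_apply, star_star,
      Finset.mul_sum]
    refine Finset.sum_congr rfl fun i _ => Finset.sum_congr rfl fun l _ => ?_
    simp only [RCLike.star_def]
    ring
  constructor
  · -- forward direction
    intro hP j hj1 hjk z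
    have hj0 : (0 : ℕ) < j := hj1
    set z' : Fin k → M := fun i => if h : (i : ℕ) < j then z ⟨i, h⟩ else z ⟨0, hj0⟩ with hz'
    have hPSD' : (Matrix.of fun i l : Fin k => R (z' i, z' l)).PosSemidef := by
      refine Matrix.PosSemidef.of_dotProduct_mulVec_nonneg (hherm z') fun x => ?_
      have hx := hP z' (star x)
      have hx' := hquad (Matrix.of fun i l : Fin k => R (z' i, z' l)) (star x)
      simp only [Matrix.of_apply] at hx'
      rw [hx'] at hx
      simpa using hx
    have hzz : ∀ i : Fin j, z' (Fin.castLE hjk i) = z i := by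
      intro i
      have : ((Fin.castLE hjk i : Fin k) : ℕ) < j := i.2
      simp [hz', this]
    have hPSD : (Matrix.of fun i l : Fin j => R (z i, z l)).PosSemidef := by
      have hsub : (Matrix.of fun i l : Fin j => R (z i, z l)) =
          (Matrix.of fun i l : Fin k => R (z' i, z' l)).submatrix
            (Fin.castLE hjk) (Fin.castLE hjk) := by
        ext i l
        simp [hzz]
      rw [hsub]
      exact hPSD'.submatrix _
    have h1 : Matrix.det (Matrix.of fun i l : Fin j => R (z i, z l)) =
        ((∏ i, hPSD.1.eigenvalues i : ℝ) : ℂ) := by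
      rw [hPSD.1.det_eq_prod_eigenvalues]
      push_cast
      rfl
    rw [hdetCB z] at h1
    rw [Complex.ofReal_inj.mp h1]
    exact Finset.prod_nonneg fun i _ => hPSD.eigenvalues_nonneg i
  · -- backward direction
    intro hm z a
    set T : Matrix (Fin k) (Fin k) ℂ := Matrix.of fun i l : Fin k => R (z i, z l) with hT
    have hPSD : T.PosSemidef := by
      apply psd_of_minors T (hherm z)
      intro s
      rcases Nat.eq_zero_or_pos s.card with h0 | hpos
      · refine ⟨1, zero_le_one, ?_⟩
        have hse : s = ∅ := Finset.card_eq_zero.mp h0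
        subst hse
        simp [Matrix.det_isEmpty]
      · set es : ↥s ≃ Fin s.card := Fintype.equivFinOfCardEq (Fintype.card_coe s) with hes
        set w : Fin s.card → M := fun i => z ((es.symm i) : Fin k) with hw
        have hdet : Matrix.det (Matrix.of fun i l : ↥s => T i l) =
            Matrix.det (Matrix.of fun i l : Fin s.card => R (w i, w l)) := by
          rw [← Matrix.det_submatrix_equiv_self es.symm
            (Matrix.of fun i l : ↥s => T i l)]
          congr 1
        refine ⟨_, hm s.card hpos (by simpa using Finset.card_le_univ s) w, ?_⟩
        rw [hdet, hdetCB w]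
    have h2 := hPSD.dotProduct_mulVec_nonneg (star a)
    have h3 := hquad T a
    rw [← h3] at h2
    exact h2
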